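/- If there exists ν ∈ (0,1) such that ‖I - νA‖ < 1 - ν (operator 2-norm), then the map F(x) = x - ν(Ax - |x| - b) is a contraction on ℝ^n with Lipschitz constant ‖I - νA‖ + ν < 1. -/

import Mathlib

open Matrix

/-- Componentwise absolute value of a vector. -/
def vecAbs {n : ℕ} (x : EuclideanSpace ℝ (Fin n)) : EuclideanSpace ℝ (Fin n) :=
  WithLp.toLp 2 (fun i => |x i|)

/-- The operator 2-norm of a matrix. -/
noncomputable def opNorm {n : ℕ} (A : Matrix (Fin n) (Fin n) ℝ) : ℝ :=
  ‖LinearMap.toContinuousLinearMap (Matrix.toEuclideanLin A)‖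

lemma vecAbs_lip {n : ℕ} (x y : EuclideanSpace ℝ (Fin n)) :
    ‖vecAbs x - vecAbs y‖ ≤ ‖x - y‖ := by
  rw [EuclideanSpace.norm_eq, EuclideanSpace.norm_eq]
  apply Real.sqrt_le_sqrt
  apply Finset.sum_le_sum
  intro i _
  have h1 : (vecAbs x - vecAbs y) i = |x i| - |y i| := rfl
  have h2 : (x - y) i = x i - y i := rfl
  rw [h1, h2]
  gcongr
  simp only [Real.norm_eq_abs]
  exact abs_abs_sub_abs_le_abs_sub _ _

/-- If `ν ∈ (0,1)` satisfies `‖I - νA‖ < 1 - ν`, then `F(x) = x - ν(Ax - |x| - b)` is a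
contraction with Lipschitz constant `‖I - νA‖ + ν < 1`. -/
theorem fixed_point_contraction (n : ℕ) (A : Matrix (Fin n) (Fin n) ℝ)
    (b : EuclideanSpace ℝ (Fin n)) (ν : ℝ) (hν : ν ∈ Set.Ioo (0 : ℝ) 1)
    (hA : opNorm (1 - ν • A) < 1 - ν) :
    let F : EuclideanSpace ℝ (Fin n) → EuclideanSpace ℝ (Fin n) :=
      fun x => x - ν • (Matrix.toEuclideanLin A x - vecAbs x - b)
    opNorm (1 - ν • A) + ν < 1 ∧
      ∀ x y : EuclideanSpace ℝ (Fin n),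
        ‖F x - F y‖ ≤ (opNorm (1 - ν • A) + ν) * ‖x - y‖ := by
  obtain ⟨hν0, hν1⟩ := hν
  intro F
  refine ⟨by linarith, fun x y => ?_⟩
  have key : F x - F y =
      Matrix.toEuclideanLin (1 - ν • A) (x - y) + ν • (vecAbs x - vecAbs y) := by
    have hz : Matrix.toEuclideanLin (1 - ν • A) (x - y)
        = (x - y) - ν • Matrix.toEuclideanLin A (x - y) := by
      simp [map_sub, _root_.map_smul, Matrix.toEuclideanLin_apply, Matrix.one_mulVec]
      module
    rw [hz, map_sub]
    simp only [F]
    module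
  rw [key]
  have hT : ‖Matrix.toEuclideanLin (1 - ν • A) (x - y)‖
      ≤ opNorm (1 - ν • A) * ‖x - y‖ := by
    exact (LinearMap.toContinuousLinearMap
      (Matrix.toEuclideanLin (1 - ν • A))).le_opNorm (x - y)
  calc ‖Matrix.toEuclideanLin (1 - ν • A) (x - y) + ν • (vecAbs x - vecAbs y)‖
      ≤ ‖Matrix.toEuclideanLin (1 - ν • A) (x - y)‖ + ‖ν • (vecAbs x - vecAbs y)‖ :=
        norm_add_le _ _
    _ ≤ opNorm (1 - ν • A) * ‖x - y‖ + ν * ‖x - y‖ := by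
        refine add_le_add hT ?_
        rw [norm_smul, Real.norm_eq_abs, abs_of_pos hν0]
        exact mul_le_mul_of_nonneg_left (vecAbs_lip x y) hν0.le
    _ = (opNorm (1 - ν • A) + ν) * ‖x - y‖ := by ring
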